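/- Let C be a triangulated category and Y a Σ-stable full additive subcategory closed under direct summands. Then Y is covariantly finite in C if and only if C has enough ξ^Y-injectives and Y = I(ξ^Y). -/

import Mathlib

open CategoryTheory CategoryTheory.Limits CategoryTheory.Pretriangulated

variable {C : Type*} [Category C] [Preadditive C] [HasZeroObject C] [HasShift C ℤ]
  [∀ n : ℤ, (shiftFunctor C n).Additive] [Pretriangulated C] [HasBinaryBiproducts C]

/-- The class of `Hom(-,Y)`-exact distinguished triangles. -/
def xiY (Y : Set C) : Set (Triangle C) :=
  {T | T ∈ (distTriang C) ∧
    ∀ Y' ∈ Y, Function.Surjective (fun u : T.obj₂ ⟶ Y' => T.mor₁ ≫ u)}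

/-- An object `I` is `ξ`-injective if `Hom(-, I)` sends every triangle in `ξ` to a
short exact sequence of abelian groups. -/
def IsXiInjective (ξ : Set (Triangle C)) (I : C) : Prop :=
  ∀ T ∈ ξ,
    Function.Injective (fun u : T.obj₃ ⟶ I => T.mor₂ ≫ u) ∧
    (∀ v : T.obj₃ ⟶ I, T.mor₁ ≫ T.mor₂ ≫ v = 0) ∧
    (∀ u : T.obj₂ ⟶ I, T.mor₁ ≫ u = 0 → ∃ v : T.obj₃ ⟶ I, T.mor₂ ≫ v = u) ∧
    Function.Surjective (fun u : T.obj₂ ⟶ I => T.mor₁ ≫ u)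

/-- Any object of `Y` is `ξ^Y`-injective (needs only Σ-stability and summand closure). -/
lemma mem_Y_isXiInjective (Y : Set C)
    (hshift : ∀ A : C, A ∈ Y ↔ (A⟦(1 : ℤ)⟧) ∈ Y)
    (hsummand : ∀ (P Q : C), Q ∈ Y → ∀ (s : P ⟶ Q) (r : Q ⟶ P), s ≫ r = 𝟙 P → P ∈ Y)
    {I : C} (hI : I ∈ Y) : IsXiInjective (xiY Y) I := by
  rintro T ⟨hdist, hsurj⟩
  refine ⟨?_, ?_, ?_, hsurj I hI⟩
  · -- injectivity of `u ↦ T.mor₂ ≫ u`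
    intro v v' hvv'
    simp only at hvv'
    have h0 : T.mor₂ ≫ (v - v') = 0 := by
      rw [Preadditive.comp_sub, hvv', sub_self]
    obtain ⟨t, ht⟩ := Triangle.yoneda_exact₃ T hdist (v - v') h0
    -- factor `t : T.obj₁⟦1⟧ ⟶ I` through `T.mor₁⟦1⟧`
    have hJ : (I⟦(-1 : ℤ)⟧) ∈ Y := by
      rw [hshift]
      exact hsummand _ I hI ((shiftEquiv C (1 : ℤ)).counitIso.app I).hom
        ((shiftEquiv C (1 : ℤ)).counitIso.app I).inv (Iso.hom_inv_id _)
    set adj := (shiftEquiv C (1 : ℤ)).toAdjunction with hadj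
    obtain ⟨s, hs⟩ := hsurj _ hJ (adj.homEquiv T.obj₁ I t)
    simp only at hs
    have ht' : t = T.mor₁⟦(1 : ℤ)⟧' ≫ (adj.homEquiv T.obj₂ I).symm s := by
      have := (adj.homEquiv T.obj₁ I).symm_apply_apply t
      rw [← this, ← hs]
      refine (adj.homEquiv_naturality_left_symm T.mor₁ s).trans ?_
      rfl
    have : v - v' = 0 := by
      rw [ht, ht']
      refine (Category.assoc _ _ _).symm.trans ?_
      rw [comp_distTriang_mor_zero₃₁ T hdist]
      exact zero_comp
    have := sub_eq_zero.mp this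
    exact this
  · intro v
    rw [← Category.assoc, comp_distTriang_mor_zero₁₂ T hdist, zero_comp]
  · intro u hu
    obtain ⟨v, hv⟩ := Triangle.yoneda_exact₂ T hdist u hu
    exact ⟨v, hv.symm⟩

theorem stmt_12 (Y : Set C)
    (hzero : ∀ Z : C, IsZero Z → Z ∈ Y)
    (hadd : ∀ A B : C, A ∈ Y → B ∈ Y → (A ⊞ B) ∈ Y)
    (hshift : ∀ A : C, A ∈ Y ↔ (A⟦(1 : ℤ)⟧) ∈ Y)
    (hsummand : ∀ (P Q : C), Q ∈ Y → ∀ (s : P ⟶ Q) (r : Q ⟶ P), s ≫ r = 𝟙 P → P ∈ Y) :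
    (∀ Z : C, ∃ Y' ∈ Y, ∃ f : Z ⟶ Y',
      ∀ Y'' ∈ Y, ∀ u : Z ⟶ Y'', ∃ v : Y' ⟶ Y'', f ≫ v = u) ↔
    ((∀ A : C, ∃ (I K : C) (f : A ⟶ I) (g : I ⟶ K) (h : K ⟶ A⟦(1 : ℤ)⟧),
        Triangle.mk f g h ∈ xiY Y ∧ IsXiInjective (xiY Y) I) ∧
     (∀ I : C, I ∈ Y ↔ IsXiInjective (xiY Y) I)) := by
  constructor
  · intro happrox
    constructor
    · -- enough ξ^Y-injectives
      intro A
      obtain ⟨Y', hY', f, hf⟩ := happrox A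
      obtain ⟨K, g, h, hT⟩ := distinguished_cocone_triangle f
      refine ⟨Y', K, f, g, h, ⟨hT, ?_⟩, mem_Y_isXiInjective Y hshift hsummand hY'⟩
      intro Y'' hY'' u
      obtain ⟨v, hv⟩ := hf Y'' hY'' u
      exact ⟨v, hv⟩
    · -- Y = I(ξ^Y)
      intro I
      constructor
      · exact mem_Y_isXiInjective Y hshift hsummand
      · intro hinj
        obtain ⟨Y', hY', f, hf⟩ := happrox I
        obtain ⟨K, g, h, hT⟩ := distinguished_cocone_triangle f
        have hxi : Triangle.mk f g h ∈ xiY Y := by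
          refine ⟨hT, fun Y'' hY'' u => ?_⟩
          obtain ⟨v, hv⟩ := hf Y'' hY'' u
          exact ⟨v, hv⟩
        obtain ⟨_, _, _, hsurj⟩ := hinj _ hxi
        obtain ⟨r, hr⟩ := hsurj (𝟙 I)
        exact hsummand I Y' hY' f r hr
  · rintro ⟨henough, hYI⟩ Z
    obtain ⟨I, K, f, g, h, ⟨hdist, hsurj⟩, hinjI⟩ := henough Z
    refine ⟨I, (hYI I).mpr hinjI, f, fun Y'' hY'' u => ?_⟩
    obtain ⟨v, hv⟩ := hsurj Y'' hY'' u
    exact ⟨v, hv⟩
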